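/- Let f : ℕ → ℕ be the difference Hilbert function of a zero-dimensional scheme in P^2, so f(i) ≤ i+1, f has no internal zeros, and once f(j) ≤ f(j+1) fails it is non-increasing thereafter (f is an O-sequence for P^2). If f(i) = i+1 for i ≤ u, f(d+1) > 0, and Σ_i f(i) < (u+1)d - u^2 + u + 2 with u+1 ≤ d, then there exists j ≤ d with 0 < f(j) = f(j+1) ≤ u. -/

import Mathlib

lemma stmt10_gauss (n : ℕ) : 2 * ∑ i ∈ Finset.range n, ((i : ℤ) + 1) = n * (n + 1) := by
  induction n with
  | zero => simp
  | succ k ih =>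
    rw [Finset.sum_range_succ]
    push_cast
    push_cast at ih
    linarith [ih]

lemma stmt10_tri (m : ℕ) : 2 * ∑ j ∈ Finset.range m, ((m : ℤ) - j) = m * (m + 1) := by
  induction m with
  | zero => simp
  | succ k ih =>
    rw [Finset.sum_range_succ]
    have h : ∑ j ∈ Finset.range k, (((k:ℕ)+1 : ℤ) - j)
        = (∑ j ∈ Finset.range k, ((k:ℤ) - j)) + k := by
      have : ∀ j ∈ Finset.range k, (((k:ℕ)+1 : ℤ) - j) = ((k:ℤ) - j) + 1 := by
        intro j _; ring
      rw [Finset.sum_congr rfl this, Finset.sum_add_distrib, Finset.sum_const,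
        Finset.card_range, nsmul_eq_mul, mul_one]
    push_cast
    push_cast at h ih
    linarith

/-- Let `f : ℕ → ℕ` be an O-sequence for `P^2`: `f 0 = 1`,
`f i ≤ i+1`, `f i ≤ f (i-1) + 1`, no internal zeros, and once `f` fails to be
nondecreasing it is non-increasing thereafter. If `f i = i+1` for `i ≤ u`,
`f (d+1) > 0`, `u+1 ≤ d`, and `∑ f(i) < (u+1)d - u^2 + u + 2`, then there
exists `j ≤ d` with `0 < f j = f (j+1) ≤ u`. -/
theorem stmt_10 (f : ℕ → ℕ) (u d : ℕ) (hud : u + 1 ≤ d)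
    (hf0 : f 0 = 1)
    (hbound : ∀ i, f i ≤ i + 1)
    (hstep : ∀ i, 1 ≤ i → f i ≤ f (i - 1) + 1)
    (hnozero : ∀ a, f a = 0 → ∀ b, a ≤ b → f b = 0)
    (hdecr : ∀ j, f (j + 1) < f j → ∀ t, j ≤ t → f (t + 1) ≤ f t)
    (hini : ∀ i ≤ u, f i = i + 1)
    (hend : 0 < f (d + 1))
    (hsum : ∃ T, (∀ i, T ≤ i → f i = 0) ∧
      (∑ i ∈ Finset.range T, (f i : ℤ)) < ((u : ℤ) + 1) * d - (u : ℤ) ^ 2 + u + 2) :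
    ∃ j ≤ d, 0 < f j ∧ f j = f (j + 1) ∧ f (j + 1) ≤ u := by
  by_contra hcon
  push_neg at hcon
  obtain ⟨T, hT, hsum⟩ := hsum
  have hpos : ∀ i ≤ d + 1, 0 < f i := by
    intro i hi
    rcases Nat.eq_zero_or_pos (f i) with h | h
    · exact absurd (hnozero i h (d+1) hi) (by omega)
    · exact h
  have hTd : d + 2 ≤ T := by
    by_contra hlt
    push_neg at hlt
    have h1 := hT (d+1) (by omega)
    have h2 := hpos (d+1) le_rfl
    omega
  have hmonoS : (∑ i ∈ Finset.range (d+2), (f i : ℤ)) ≤ ∑ i ∈ Finset.range T, (f i : ℤ) :=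
    Finset.sum_le_sum_of_subset_of_nonneg (Finset.range_subset_range.mpr hTd)
      (fun i _ _ => by positivity)
  have hS : (∑ i ∈ Finset.range (d+2), (f i : ℤ)) < ((u:ℤ)+1) * d - (u:ℤ)^2 + u + 2 :=
    lt_of_le_of_lt hmonoS hsum
  have hsplit1 : (∑ i ∈ Finset.range (d+2), (f i : ℤ))
      = (∑ i ∈ Finset.range (u+1), (f i : ℤ)) + ∑ i ∈ Finset.Ico (u+1) (d+2), (f i : ℤ) := by
    rw [Finset.range_eq_Ico, ← Finset.sum_Ico_consecutive _ (Nat.zero_le _) (by omega : u+1 ≤ d+2),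
      ← Finset.range_eq_Ico]
  have hfirst : (∑ i ∈ Finset.range (u+1), (f i : ℤ)) = ∑ i ∈ Finset.range (u+1), ((i:ℤ)+1) := by
    apply Finset.sum_congr rfl
    intro i hi
    rw [hini i (Nat.lt_succ_iff.mp (Finset.mem_range.mp hi))]
    push_cast; ring
  have hg := stmt10_gauss (u+1)
  by_cases hA : ∀ t, u + 1 ≤ t → t ≤ d + 1 → u + 1 ≤ f t
  · have h2 : ((d + 1 - u : ℕ) : ℤ) * ((u:ℤ)+1) ≤ ∑ i ∈ Finset.Ico (u+1) (d+2), (f i : ℤ) := by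
      have h := Finset.card_nsmul_le_sum (Finset.Ico (u+1) (d+2)) (fun i => (f i : ℤ)) ((u:ℤ)+1)
        (fun i hi => by
          obtain ⟨ha, hb⟩ := Finset.mem_Ico.mp hi
          show ((u:ℤ)+1) ≤ (f i : ℤ)
          exact_mod_cast hA i ha (by omega))
      rwa [Nat.card_Ico, (by omega : d + 2 - (u+1) = d + 1 - u), nsmul_eq_mul] at h
    have hcast : ((d + 1 - u : ℕ) : ℤ) = (d:ℤ) + 1 - u := by omega
    rw [hcast] at h2
    have hkeyA : (0:ℤ) ≤ (u:ℤ) * ((u:ℤ)+1) := by positivity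
    push_cast at hg
    nlinarith [hS, hsplit1, hfirst, h2, hg, hkeyA]
  · push_neg at hA
    have hEx : ∃ t, u + 1 ≤ t ∧ t ≤ d + 1 ∧ f t ≤ u := by
      obtain ⟨t, h1, h2, h3⟩ := hA; exact ⟨t, h1, h2, by omega⟩
    classical
    set t0 := Nat.find hEx with ht0def
    obtain ⟨ht0u, ht0d, ht0f⟩ := Nat.find_spec hEx
    rw [← ht0def] at ht0u ht0d ht0f
    have hpre : ∀ t, u + 1 ≤ t → t < t0 → u + 1 ≤ f t := by
      intro t htu htlt
      have h := Nat.find_min hEx htlt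
      push_neg at h
      have := h htu (by omega)
      omega
    clear_value t0
    have hfprev : u + 1 ≤ f (t0 - 1) := by
      rcases Nat.lt_or_ge (t0 - 1) (u + 1) with h | h
      · have he : t0 - 1 = u := by omega
        rw [he, hini u le_rfl]
      · exact hpre _ h (by omega)
    have hdropm : f ((t0 - 1) + 1) < f (t0 - 1) := by
      have he : (t0 - 1) + 1 = t0 := by omega
      rw [he]; omega
    have hmono : ∀ t, t0 - 1 ≤ t → f (t + 1) ≤ f t := hdecr (t0 - 1) hdropm
    have hleu : ∀ t, t0 ≤ t → f t ≤ u := by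
      intro t ht
      induction t, ht using Nat.le_induction with
      | base => exact ht0f
      | succ k hk ih => exact le_trans (hmono k (by omega)) ih
    have hstrict : ∀ t, t0 ≤ t → t ≤ d → f (t + 1) < f t := by
      intro t h1 h2
      have hle := hmono t (by omega)
      rcases lt_or_eq_of_le hle with h | h
      · exact h
      · have hp := hpos t (by omega)
        have hu1 := hcon t h2 hp h.symm
        have hu2 := hleu (t+1) (by omega)
        omega
    have hlb : ∀ k, t0 ≤ d + 1 - k → k + 1 ≤ f (d + 1 - k) := by
      intro k
      induction k with
      | zero => intro _; simpa [Nat.one_le_iff_ne_zero, Nat.pos_iff_ne_zero] using hpos (d+1) le_rfl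
      | succ k ih =>
        intro hk
        have h1 := ih (by omega)
        have hs := hstrict (d + 1 - (k+1)) hk (by omega)
        have he : (d + 1 - (k+1)) + 1 = d + 1 - k := by omega
        rw [he] at hs
        omega
    have hlb' : ∀ i, t0 ≤ i → i ≤ d + 1 → d + 2 - i ≤ f i := by
      intro i h1 h2
      have h := hlb (d + 1 - i) (by omega)
      have he : d + 1 - (d + 1 - i) = i := by omega
      rw [he] at h
      omega
    set m := d + 2 - t0 with hm
    have hmu : m ≤ u := by
      have h := hlb' t0 le_rfl (by omega)
      omega
    have hsplit2 : (∑ i ∈ Finset.Ico (u+1) (d+2), (f i : ℤ))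
        = (∑ i ∈ Finset.Ico (u+1) t0, (f i : ℤ)) + ∑ i ∈ Finset.Ico t0 (d+2), (f i : ℤ) :=
      (Finset.sum_Ico_consecutive _ ht0u (by omega)).symm
    have h2 : ((t0 - (u+1) : ℕ) : ℤ) * ((u:ℤ)+1) ≤ ∑ i ∈ Finset.Ico (u+1) t0, (f i : ℤ) := by
      have h := Finset.card_nsmul_le_sum (Finset.Ico (u+1) t0) (fun i => (f i : ℤ)) ((u:ℤ)+1)
        (fun i hi => by
          obtain ⟨ha, hb⟩ := Finset.mem_Ico.mp hi
          show ((u:ℤ)+1) ≤ (f i : ℤ)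
          exact_mod_cast hpre i ha hb)
      rwa [Nat.card_Ico, nsmul_eq_mul] at h
    have hcast2 : ((t0 - (u+1) : ℕ) : ℤ) = (d:ℤ) + 1 - m - u := by omega
    rw [hcast2] at h2
    have h3 : (∑ i ∈ Finset.Ico t0 (d+2), ((d:ℤ) + 2 - i)) ≤ ∑ i ∈ Finset.Ico t0 (d+2), (f i : ℤ) := by
      apply Finset.sum_le_sum
      intro i hi
      obtain ⟨ha, hb⟩ := Finset.mem_Ico.mp hi
      have h := hlb' i ha (by omega)
      omega
    have h4 : (∑ i ∈ Finset.Ico t0 (d+2), ((d:ℤ) + 2 - i))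
        = ∑ j ∈ Finset.range m, ((m:ℤ) - j) := by
      rw [Finset.sum_Ico_eq_sum_range]
      apply Finset.sum_congr (by rw [hm])
      intro j hj
      push_cast
      omega
    rw [h4] at h3
    have htri := stmt10_tri m
    have hkey : (0:ℤ) ≤ ((u:ℤ) - m) * ((u:ℤ) - m + 1) := by
      have hn : (0:ℤ) ≤ (u:ℤ) - m := by omega
      nlinarith
    push_cast at hg
    have hfin : 2 * (((u:ℤ)+1) * d - (u:ℤ)^2 + u + 2)
        ≤ 2 * ∑ i ∈ Finset.range (d+2), (f i : ℤ) := by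
      rw [hsplit1, hsplit2, hfirst]
      linarith [h2, h3, hg, htri, hkey]
    linarith [hS, hfin]
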